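/- arXiv:1705.03108 — 2 statements merged into one kernel-verified Lean document; each statement's English description precedes it below -/
import Mathlib

section
/- Let D be a combinatorial link diagram with strand set S, and suppose D is k-meridionally colorable via a sequence of coloring moves (A₀,f₀)→(A₁,f₁)→⋯→(A_m,f_m) (where m = n − k and A_m = S). Then for every color j ∈ {1,…,k} and every stage δ ∈ {0,1,…,m}, the set f_δ^{-1}(j) of strands carrying color j at stage δ is connected under the adjacency relation. -/
/-- A combinatorial link diagram: `n` strands and `n` crossings; each crossing has an
(unordered, here recorded as ordered) pair of understrands and an overstrand; every
strand occurs as an understrand of exactly two crossings, counted with multiplicity. -/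
structure LinkDiagram where
  n : ℕ
  Strand : Type
  Crossing : Type
  [strandFintype : Fintype Strand]
  [strandDecEq : DecidableEq Strand]
  [crossingFintype : Fintype Crossing]
  card_strand : Fintype.card Strand = n
  card_crossing : Fintype.card Crossing = n
  under1 : Crossing → Strand
  under2 : Crossing → Strand
  overstrand : Crossing → Strand
  under_twice : ∀ s : Strand,
    Nat.card {c : Crossing // under1 c = s} + Nat.card {c : Crossing // under2 c = s} = 2

attribute [instance] LinkDiagram.strandFintype LinkDiagram.strandDecEq
  LinkDiagram.crossingFintype

namespace LinkDiagram

/-- Two strands are adjacent if they are the two understrands of a common crossing. -/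
def Adj (D : LinkDiagram) (s t : D.Strand) : Prop :=
  ∃ c : D.Crossing, (D.under1 c = s ∧ D.under2 c = t) ∨ (D.under1 c = t ∧ D.under2 c = s)

/-- A subset `B` of the strands is connected if any two of its elements are joined by a
path of adjacent strands lying within `B`. -/
def ConnectedIn (D : LinkDiagram) (B : Set D.Strand) : Prop :=
  ∀ s ∈ B, ∀ t ∈ B,
    Relation.ReflTransGen (fun a b => a ∈ B ∧ b ∈ B ∧ D.Adj a b) s t

/-- The connected component (under adjacency) of the strand `s`. -/
def component (D : LinkDiagram) (s : D.Strand) : Set D.Strand :=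
  {t | Relation.ReflTransGen D.Adj s t}

/-- A witness that `D` is `k`-meridionally colorable: `k` distinct seed strands, partial
colorings `f i` at each stage `i = 0, …, n-k` (a strand not yet colored has value `none`),
where stage `0` colors the seed `j` with color `j` and nothing else, and each stage
`i → i+1` is a coloring move assigning a color to the single new strand `newStrand i`:
it is an understrand at a crossing whose other understrand and overstrand are already
colored, and it receives the color of the other understrand.  At the final stage
`n - k`, every strand is colored. -/
structure ColoringProcess (D : LinkDiagram) (k : ℕ) where
  seed : Fin k → D.Strand
  seed_inj : Function.Injective seed
  f : ℕ → D.Strand → Option (Fin k)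
  newStrand : ℕ → D.Strand
  f0_seed : ∀ j : Fin k, f 0 (seed j) = some j
  f0_none : ∀ s : D.Strand, (∀ j : Fin k, seed j ≠ s) → f 0 s = none
  move_none : ∀ i < D.n - k, f i (newStrand i) = none
  move_eq : ∀ i < D.n - k, ∀ s : D.Strand, s ≠ newStrand i → f (i + 1) s = f i s
  move_adj : ∀ i < D.n - k, ∃ c : D.Crossing, ∃ si : D.Strand,
      ((D.under1 c = newStrand i ∧ D.under2 c = si) ∨
        (D.under1 c = si ∧ D.under2 c = newStrand i)) ∧
      (f i si).isSome ∧ (f i (D.overstrand c)).isSome ∧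
      f (i + 1) (newStrand i) = f i si
  final : ∀ s : D.Strand, (f (D.n - k) s).isSome

/-- The final coloring of a coloring process. -/
def ColoringProcess.final' {D : LinkDiagram} {k : ℕ} (p : ColoringProcess D k) :
    D.Strand → Option (Fin k) :=
  p.f (D.n - k)

/-- `h` is the height function of the coloring sequence associated to the process `p`:
the `j`-th seed (j = 1, …, k) has height `-j`, and the strand colored by the `i`-th
coloring move has height `-(k + i)`. -/
def IsHeightFunction {D : LinkDiagram} {k : ℕ} (p : ColoringProcess D k)
    (h : D.Strand → ℤ) : Prop :=
  (∀ j : Fin k, h (p.seed j) = -((j : ℕ) + 1 : ℤ)) ∧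
  (∀ i < D.n - k, h (p.newStrand i) = -((k : ℤ) + (i : ℕ) + 1))

end LinkDiagram

/-- If `D` is `k`-meridionally colorable via a coloring process `p`,
then at every stage `δ ≤ n - k` and for every color `j`, the set of strands carrying
color `j` at stage `δ` is connected under the adjacency relation. -/
theorem wirtinger_colorClass_connected (D : LinkDiagram) (k : ℕ)
    (p : LinkDiagram.ColoringProcess D k) (j : Fin k) (δ : ℕ) (hδ : δ ≤ D.n - k) :
    D.ConnectedIn {s : D.Strand | p.f δ s = some j} := by

  induction δ with
  | zero =>
    intro s hs t ht
    have hseed : ∀ u : D.Strand, p.f 0 u = some j → u = p.seed j := by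
      intro u hu
      by_cases h : ∃ j' : Fin k, p.seed j' = u
      · obtain ⟨j', hj'⟩ := h
        have h2 := p.f0_seed j'
        rw [hj', hu] at h2
        have : j = j' := by injection h2
        rw [← hj', ← this]
      · push_neg at h
        rw [p.f0_none u h] at hu
        exact absurd hu (by simp)
    rw [hseed s hs, hseed t ht]
  | succ δ ih =>
    have hδ' : δ ≤ D.n - k := Nat.le_of_succ_le hδ
    have hmove : δ < D.n - k := hδ
    have ih' := ih hδ'
    set B : Set D.Strand := {s : D.Strand | p.f (δ+1) s = some j} with hB
    set Bδ : Set D.Strand := {s : D.Strand | p.f δ s = some j} with hBδ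
    have sub : Bδ ⊆ B := by
      intro s hs
      have hne : s ≠ p.newStrand δ := by
        intro h
        subst h
        exact absurd (show p.f δ (p.newStrand δ) = some j from hs)
          (by simp [p.move_none δ hmove])
      have := p.move_eq δ hmove s hne
      simpa [B, Bδ, this] using hs
    have symmR : Symmetric (fun a b => a ∈ B ∧ b ∈ B ∧ D.Adj a b) := by
      rintro a b ⟨ha, hb, c, hc⟩
      exact ⟨hb, ha, c, hc.symm⟩
    have lift : ∀ s t, Relation.ReflTransGen (fun a b => a ∈ Bδ ∧ b ∈ Bδ ∧ D.Adj a b) s t →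
        Relation.ReflTransGen (fun a b => a ∈ B ∧ b ∈ B ∧ D.Adj a b) s t := by
      intro s t h
      exact Relation.ReflTransGen.mono (by intro a b ⟨ha, hb, hab⟩; exact ⟨sub ha, sub hb, hab⟩) _ _ h
    have reduce : ∀ u ∈ B, ∃ u', u' ∈ Bδ ∧
        Relation.ReflTransGen (fun a b => a ∈ B ∧ b ∈ B ∧ D.Adj a b) u u' := by
      intro u hu
      by_cases hne : u = p.newStrand δ
      · obtain ⟨c, si, hadj, hsi, _, heq⟩ := p.move_adj δ hmove
        have hsiδ : si ∈ Bδ := by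
          have : p.f δ si = some j := by rw [← heq, ← hne]; exact hu
          exact this
        refine ⟨si, hsiδ, Relation.ReflTransGen.single ⟨hu, sub hsiδ, c, ?_⟩⟩
        rcases hadj with ⟨h1, h2⟩ | ⟨h1, h2⟩
        · exact Or.inl ⟨by rw [h1, hne], h2⟩
        · exact Or.inr ⟨h1, by rw [h2, hne]⟩
      · refine ⟨u, ?_, Relation.ReflTransGen.refl⟩
        have := p.move_eq δ hmove u hne
        simpa [Bδ, B, ← this] using hu
    intro s hs t ht
    obtain ⟨s', hs', ps⟩ := reduce s hs
    obtain ⟨t', ht', pt⟩ := reduce t ht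
    exact ps.trans ((lift s' t' (ih' s' hs' t' ht')).trans
      ((@Relation.ReflTransGen.stdSymm _ _ ⟨symmR⟩).symm _ _ pt))
end

section
/- Let D be a combinatorial link diagram with strand set S in which the two understrands of every crossing are distinct strands, suppose D is k-meridionally colorable via a sequence of coloring moves with final coloring f : S → {1,…,k}, and let h be the height function of the associated coloring sequence. Then for every color j ∈ {1,…,k}: if the color class f^{-1}(j) is a proper subset of the connected component of S containing it, then f^{-1}(j) can be ordered as a path t₁,…,t_a with consecutive strands adjacent and in any such ordering h has a unique local maximum; if f^{-1}(j) equals an entire connected component of S, then in the cyclic ordering of that component by adjacency h has a unique local maximum (neighbors taken cyclically). In either case the unique local maximum occurs at the seed strand of color j. -/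
namespace LinkDiagram

/-- `t : Fin a → Strand` is an ordering of the set `C` as a sequence in which consecutive
strands are adjacent. -/
def IsPathOrdering (D : LinkDiagram) (C : Set D.Strand) (a : ℕ) (t : Fin a → D.Strand) :
    Prop :=
  Function.Injective t ∧ Set.range t = C ∧
    ∀ i : Fin a, ∀ hi : (i : ℕ) + 1 < a, D.Adj (t i) (t ⟨(i : ℕ) + 1, hi⟩)

/-- `hgt` has a local maximum at position `m` of the ordering `t`: the value at `m` is
greater than the value at each neighbouring position. -/
def IsPathLocalMax (D : LinkDiagram) (hgt : D.Strand → ℤ) (a : ℕ) (t : Fin a → D.Strand)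
    (m : Fin a) : Prop :=
  (∀ hm : (m : ℕ) + 1 < a, hgt (t ⟨(m : ℕ) + 1, hm⟩) < hgt (t m)) ∧
  (0 < (m : ℕ) →
    hgt (t ⟨(m : ℕ) - 1, lt_of_le_of_lt (Nat.sub_le _ _) m.isLt⟩) < hgt (t m))

end LinkDiagram

namespace LinkDiagram

/-- `t : Fin a → Strand` is a cyclic ordering of the set `C` by adjacency. -/
def IsCycleOrdering (D : LinkDiagram) (C : Set D.Strand) (a : ℕ) (ha : 0 < a)
    (t : Fin a → D.Strand) : Prop :=
  Function.Injective t ∧ Set.range t = C ∧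
    ∀ i : Fin a, D.Adj (t i) (t ⟨((i : ℕ) + 1) % a, Nat.mod_lt _ ha⟩)

/-- `hgt` has a local maximum at position `m` of the cyclic ordering `t` (neighbours
taken cyclically). -/
def IsCycLocalMax (D : LinkDiagram) (hgt : D.Strand → ℤ) (a : ℕ) (ha : 0 < a)
    (t : Fin a → D.Strand) (m : Fin a) : Prop :=
  hgt (t ⟨((m : ℕ) + 1) % a, Nat.mod_lt _ ha⟩) < hgt (t m) ∧
  hgt (t ⟨((m : ℕ) + a - 1) % a, Nat.mod_lt _ ha⟩) < hgt (t m)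

end LinkDiagram


section Engine


noncomputable def chainL {α : Type*} (next : α → Option α) : ℕ → α → List α
  | 0, _ => []
  | (fuel+1), u => u :: (match next u with | none => [] | some w => chainL next fuel w)

theorem exists_path_list {α : Type*} [Fintype α] [DecidableEq α]
    (A : α → α → Prop) (C : Set α) (seed : α) (hgt : α → ℤ)
    (Asymm : ∀ a b, A a b → A b a)
    (no3 : ∀ s u v w, A s u → A s v → A s w → u ≠ v → u ≠ w → v ≠ w → False)
    (hseed : seed ∈ C)
    (hpar : ∀ s, s ∈ C → s ≠ seed → ∃ u, u ∈ C ∧ A s u ∧ hgt s < hgt u) :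
    ∃ L : List α, L.Nodup ∧ (∀ s, s ∈ L ↔ s ∈ C) ∧ L.IsChain A ∧ seed ∈ L := by
  classical
  obtain ⟨parent, parent_spec⟩ : ∃ p : α → α, ∀ s, s ∈ C → s ≠ seed →
      p s ∈ C ∧ A s (p s) ∧ hgt s < hgt (p s) := by
    refine ⟨fun s => if hs : s ∈ C ∧ s ≠ seed then (hpar s hs.1 hs.2).choose else s, ?_⟩
    intro s hs hns
    simp only [dif_pos (And.intro hs hns)]
    exact (hpar s hs hns).choose_spec
  have child_unique : ∀ v, v ∈ C → v ≠ seed → ∀ c1 c2,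
      (c1 ∈ C ∧ c1 ≠ seed ∧ parent c1 = v) → (c2 ∈ C ∧ c2 ≠ seed ∧ parent c2 = v) →
      c1 = c2 := by
    intro v hv hvs c1 c2 h1 h2
    by_contra hne
    obtain ⟨h1C, h1s, h1p⟩ := h1
    obtain ⟨h2C, h2s, h2p⟩ := h2
    obtain ⟨hpC, hpA, hph⟩ := parent_spec v hv hvs
    obtain ⟨-, h1A, h1h⟩ := parent_spec c1 h1C h1s
    obtain ⟨-, h2A, h2h⟩ := parent_spec c2 h2C h2s
    rw [h1p] at h1A h1h
    rw [h2p] at h2A h2h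
    refine no3 v (parent v) c1 c2 hpA (Asymm _ _ h1A) (Asymm _ _ h2A) ?_ ?_ hne
    · intro e; rw [← e] at h1h; omega
    · intro e; rw [← e] at h2h; omega
  obtain ⟨next, next_mem, next_none⟩ : ∃ nx : α → Option α,
      (∀ v w, nx v = some w → w ∈ C ∧ w ≠ seed ∧ parent w = v) ∧
      (∀ v, nx v = none → ∀ c, ¬(c ∈ C ∧ c ≠ seed ∧ parent c = v)) := by
    refine ⟨fun v => if h : ∃ c, c ∈ C ∧ c ≠ seed ∧ parent c = v then some h.choose
      else none, ?_, ?_⟩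
    · intro v w hw
      by_cases he : ∃ c, c ∈ C ∧ c ≠ seed ∧ parent c = v
      · simp only [dif_pos he] at hw
        cases hw
        exact he.choose_spec
      · simp only [dif_neg he] at hw
        simp at hw
    · intro v hv c hc
      simp only [dif_pos (⟨c, hc⟩ : ∃ c, c ∈ C ∧ c ≠ seed ∧ parent c = v)] at hv
      simp at hv
  have head_mem : ∀ (L : List α) (u : α), L.head? = some u → u ∈ L := by
    intro L u h
    cases L with
    | nil => simp at h
    | cons a t =>
      rw [List.head?_cons] at h
      cases h
      exact List.mem_cons_self
  have chain_spec : ∀ fuel u, u ∈ C → u ≠ seed →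
      (Finset.univ.filter (fun s => s ∈ C ∧ s ≠ seed ∧ hgt s ≤ hgt u)).card < fuel →
      (chainL next fuel u).head? = some u ∧
      (∀ s ∈ chainL next fuel u, s ∈ C ∧ s ≠ seed ∧ hgt s ≤ hgt u) ∧
      (chainL next fuel u).IsChain A ∧
      (chainL next fuel u).Pairwise (fun a b => hgt b < hgt a) ∧
      (∀ v c, v ∈ chainL next fuel u → c ∈ C → c ≠ seed → parent c = v →
        c ∈ chainL next fuel u) ∧
      (∀ s ∈ chainL next fuel u, ∃ m, parent^[m] s = u ∧
        ∀ x ≤ m, parent^[x] s ∈ C ∧ parent^[x] s ≠ seed) := by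
    intro fuel
    induction fuel with
    | zero => intro u _ _ h; omega
    | succ fuel IH =>
      intro u huC hus hcard
      cases hnu : next u with
      | none =>
        have hL : chainL next (fuel+1) u = [u] := by simp [chainL, hnu]
        rw [hL]
        refine ⟨rfl, ?_, ?_, ?_, ?_, ?_⟩
        · intro s hs; simp at hs; subst hs; exact ⟨huC, hus, le_refl _⟩
        · simp
        · simp
        · intro v c hv hcC hcs hcp
          simp only [List.mem_singleton] at hv
          exact absurd ⟨hcC, hcs, hv ▸ hcp⟩ (next_none u hnu c)
        · intro s hs; simp at hs; subst hs
          exact ⟨0, rfl, by intro x hx; interval_cases x; simpa using ⟨huC, hus⟩⟩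
      | some w =>
        obtain ⟨hwC, hws, hwp⟩ := next_mem u w hnu
        have hwh : hgt w < hgt u := by
          have := (parent_spec w hwC hws).2.2; rwa [hwp] at this
        have hAuw : A u w := by
          have := (parent_spec w hwC hws).2.1; rw [hwp] at this; exact Asymm _ _ this
        have hfuel : (Finset.univ.filter
            (fun s => s ∈ C ∧ s ≠ seed ∧ hgt s ≤ hgt w)).card < fuel := by
          have hss : (Finset.univ.filter (fun s => s ∈ C ∧ s ≠ seed ∧ hgt s ≤ hgt w)) ⊂
              (Finset.univ.filter (fun s => s ∈ C ∧ s ≠ seed ∧ hgt s ≤ hgt u)) := by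
            constructor
            · intro x hx
              simp only [Finset.mem_filter, Finset.mem_univ, true_and] at hx ⊢
              exact ⟨hx.1, hx.2.1, hx.2.2.trans (le_of_lt hwh)⟩
            · intro hsub
              have hu : u ∈ Finset.univ.filter
                  (fun s => s ∈ C ∧ s ≠ seed ∧ hgt s ≤ hgt u) := by
                simp only [Finset.mem_filter, Finset.mem_univ, true_and]
                exact ⟨huC, hus, le_refl _⟩
              have := hsub hu
              simp only [Finset.mem_filter, Finset.mem_univ, true_and] at this
              omega
          have := Finset.card_lt_card hss
          omega
        obtain ⟨ih1, ih2, ih3, ih4, ih5, ih6⟩ := IH w hwC hws hfuel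
        have hL : chainL next (fuel+1) u = u :: chainL next fuel w := by simp [chainL, hnu]
        rw [hL]
        refine ⟨rfl, ?_, ?_, ?_, ?_, ?_⟩
        · intro s hs
          rcases List.mem_cons.mp hs with h | h
          · subst h; exact ⟨huC, hus, le_refl _⟩
          · obtain ⟨h1, h2, h3⟩ := ih2 s h
            exact ⟨h1, h2, h3.trans (le_of_lt hwh)⟩
        · rw [List.isChain_cons]
          refine ⟨?_, ih3⟩
          intro y hy
          rw [ih1] at hy
          cases hy
          exact hAuw
        · rw [List.pairwise_cons]
          refine ⟨?_, ih4⟩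
          intro s hs
          have := (ih2 s hs).2.2
          omega
        · intro v c hv hcC hcs hcp
          rcases List.mem_cons.mp hv with h | h
          · have : c = w := child_unique u huC hus c w ⟨hcC, hcs, h ▸ hcp⟩ ⟨hwC, hws, hwp⟩
            subst this
            exact List.mem_cons_of_mem _ (head_mem _ _ ih1)
          · exact List.mem_cons_of_mem _ (ih5 v c h hcC hcs hcp)
        · intro s hs
          rcases List.mem_cons.mp hs with h | h
          · subst h
            exact ⟨0, rfl, by intro x hx; interval_cases x; simpa using ⟨huC, hus⟩⟩
          · obtain ⟨m, hm, hcond⟩ := ih6 s h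
            refine ⟨m+1, ?_, ?_⟩
            · rw [Function.iterate_succ_apply', hm, hwp]
            · intro x hx
              rcases Nat.lt_or_ge x (m+1) with h' | h'
              · exact hcond x (by omega)
              · have : x = m + 1 := by omega
                subst this
                rw [Function.iterate_succ_apply', hm, hwp]
                exact ⟨huC, hus⟩
  -- ancestor lemma
  have anc : ∀ s, s ∈ C → s ≠ seed → ∃ c m, (c ∈ C ∧ c ≠ seed ∧ parent c = seed) ∧
      parent^[m] s = c ∧ (∀ x ≤ m, parent^[x] s ∈ C ∧ parent^[x] s ≠ seed) := by
    have key : ∀ n s, (Finset.univ.filter (fun v => v ∈ C ∧ hgt s < hgt v)).card ≤ n →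
        s ∈ C → s ≠ seed → ∃ c m, (c ∈ C ∧ c ≠ seed ∧ parent c = seed) ∧
        parent^[m] s = c ∧ (∀ x ≤ m, parent^[x] s ∈ C ∧ parent^[x] s ≠ seed) := by
      intro n
      induction n with
      | zero =>
        intro s hcard hs hns
        obtain ⟨hpC, _, hph⟩ := parent_spec s hs hns
        have : parent s ∈ Finset.univ.filter (fun v => v ∈ C ∧ hgt s < hgt v) := by
          simp only [Finset.mem_filter, Finset.mem_univ, true_and]
          exact ⟨hpC, hph⟩
        have := Finset.card_pos.mpr ⟨_, this⟩
        omega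
      | succ n IH =>
        intro s hcard hs hns
        obtain ⟨hpC, _, hph⟩ := parent_spec s hs hns
        by_cases hp : parent s = seed
        · exact ⟨s, 0, ⟨hs, hns, hp⟩, rfl,
            by intro x hx; interval_cases x; simpa using ⟨hs, hns⟩⟩
        · have hlt : (Finset.univ.filter (fun v => v ∈ C ∧ hgt (parent s) < hgt v)).card ≤ n := by
            have hss : (Finset.univ.filter (fun v => v ∈ C ∧ hgt (parent s) < hgt v)) ⊂
                (Finset.univ.filter (fun v => v ∈ C ∧ hgt s < hgt v)) := by
              constructor
              · intro x hx
                simp only [Finset.mem_filter, Finset.mem_univ, true_and] at hx ⊢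
                exact ⟨hx.1, by omega⟩
              · intro hsub
                have hu : parent s ∈ Finset.univ.filter (fun v => v ∈ C ∧ hgt s < hgt v) := by
                  simp only [Finset.mem_filter, Finset.mem_univ, true_and]
                  exact ⟨hpC, hph⟩
                have := hsub hu
                simp only [Finset.mem_filter, Finset.mem_univ, true_and] at this
                omega
            have := Finset.card_lt_card hss
            omega
          obtain ⟨c, m, hc, hm, hcond⟩ := IH (parent s) hlt hpC hp
          refine ⟨c, m+1, hc, ?_, ?_⟩
          · rw [Function.iterate_succ_apply]; exact hm
          · intro x hx
            cases x with
            | zero => simpa using ⟨hs, hns⟩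
            | succ y =>
              rw [Function.iterate_succ_apply]
              exact hcond y (by omega)
    intro s hs hns
    exact key _ s (le_refl _) hs hns
  -- descend lemma
  have descend : ∀ (L : List α),
      (∀ v c, v ∈ L → c ∈ C → c ≠ seed → parent c = v → c ∈ L) →
      ∀ m s, (∀ x ≤ m, parent^[x] s ∈ C ∧ parent^[x] s ≠ seed) → parent^[m] s ∈ L →
      s ∈ L := by
    intro L hclo m
    induction m with
    | zero => intro s _ h; simpa using h
    | succ m IH =>
      intro s hcond hm
      have h0 := hcond 0 (Nat.zero_le _)
      simp only [Function.iterate_zero_apply] at h0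
      have hps : parent s ∈ L := by
        apply IH (parent s)
        · intro x hx
          have := hcond (x+1) (by omega)
          rwa [Function.iterate_succ_apply] at this
        · rwa [Function.iterate_succ_apply] at hm
      exact hclo (parent s) s hps h0.1 h0.2 rfl
  -- disjointness helper
  have nodisj : ∀ (c1 c2 s : α) (m1 m2 : ℕ), c1 ≠ c2 → parent c1 = seed →
      parent^[m1] s = c1 → parent^[m2] s = c2 →
      (∀ x ≤ m2, parent^[x] s ≠ seed) → m1 ≤ m2 → False := by
    intro c1 c2 s m1 m2 hne hp1 h1 h2 hcond hle
    rcases Nat.lt_or_ge m1 m2 with h | h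
    · have : parent^[m1+1] s = seed := by
        rw [Function.iterate_succ_apply', h1, hp1]
      exact hcond (m1+1) (by omega) this
    · exact hne (by rw [← h1, le_antisymm hle h, h2])
  have hNcard : ∀ u, (Finset.univ.filter
      (fun s => s ∈ C ∧ s ≠ seed ∧ hgt s ≤ hgt u)).card < Fintype.card α + 1 := by
    intro u
    have := Finset.card_filter_le (Finset.univ : Finset α)
      (fun s => s ∈ C ∧ s ≠ seed ∧ hgt s ≤ hgt u)
    simp only [Finset.card_univ] at this
    omega
  by_cases h1ex : ∃ c, c ∈ C ∧ c ≠ seed ∧ parent c = seed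
  · obtain ⟨c1, hc1⟩ := h1ex
    have hAc1 : A c1 seed := by
      have := (parent_spec c1 hc1.1 hc1.2.1).2.1; rwa [hc1.2.2] at this
    obtain ⟨sp1h, sp1m, sp1c, sp1p, sp1clo, sp1anc⟩ :=
      chain_spec (Fintype.card α + 1) c1 hc1.1 hc1.2.1 (hNcard c1)
    set L1 := chainL next (Fintype.card α + 1) c1 with hL1
    have hnd1 : L1.Nodup := sp1p.imp (by intro a b hlt he; rw [he] at hlt; omega)
    by_cases h2ex : ∃ c, (c ∈ C ∧ c ≠ seed ∧ parent c = seed) ∧ c ≠ c1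
    · -- two children
      obtain ⟨c2, hc2, hne21⟩ := h2ex
      have hAc2 : A c2 seed := by
        have := (parent_spec c2 hc2.1 hc2.2.1).2.1; rwa [hc2.2.2] at this
      obtain ⟨sp2h, sp2m, sp2c, sp2p, sp2clo, sp2anc⟩ :=
        chain_spec (Fintype.card α + 1) c2 hc2.1 hc2.2.1 (hNcard c2)
      set L2 := chainL next (Fintype.card α + 1) c2 with hL2
      have hnd2 : L2.Nodup := sp2p.imp (by intro a b hlt he; rw [he] at hlt; omega)
      have hdisj : ∀ s, s ∈ L1 → s ∈ L2 → False := by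
        intro s hs1 hs2
        obtain ⟨m1, hm1, hcond1⟩ := sp1anc s hs1
        obtain ⟨m2, hm2, hcond2⟩ := sp2anc s hs2
        rcases Nat.le_total m1 m2 with h | h
        · exact nodisj c1 c2 s m1 m2 hne21.symm hc1.2.2 hm1 hm2
            (fun x hx => (hcond2 x hx).2) h
        · exact nodisj c2 c1 s m2 m1 hne21 hc2.2.2 hm2 hm1
            (fun x hx => (hcond1 x hx).2) h
      refine ⟨L1.reverse ++ seed :: L2, ?_, ?_, ?_, ?_⟩
      · rw [List.nodup_append]
        refine ⟨List.nodup_reverse.mpr hnd1, ?_, ?_⟩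
        · rw [List.nodup_cons]
          exact ⟨fun h => (sp2m seed h).2.1 rfl, hnd2⟩
        · intro a ha _ hb hab
          subst hab
          rw [List.mem_reverse] at ha
          rcases List.mem_cons.mp hb with h | h
          · exact (sp1m a ha).2.1 h
          · exact hdisj a ha h
      · intro s
        constructor
        · intro hs
          rcases List.mem_append.mp hs with h | h
          · exact (sp1m s (List.mem_reverse.mp h)).1
          · rcases List.mem_cons.mp h with h | h
            · rw [h]; exact hseed
            · exact (sp2m s h).1
        · intro hs
          by_cases hss : s = seed
          · subst hss; exact List.mem_append.mpr (Or.inr (List.mem_cons_self))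
          · obtain ⟨c, m, hc, hm, hcond⟩ := anc s hs hss
            by_cases hcc1 : c = c1
            · subst hcc1
              refine List.mem_append.mpr (Or.inl (List.mem_reverse.mpr ?_))
              exact descend L1 sp1clo m s hcond (hm ▸ head_mem _ _ sp1h)
            · by_cases hcc2 : c = c2
              · subst hcc2
                refine List.mem_append.mpr (Or.inr (List.mem_cons_of_mem _ ?_))
                exact descend L2 sp2clo m s hcond (hm ▸ head_mem _ _ sp2h)
              · exfalso
                have hAc : A c seed := by
                  have := (parent_spec c hc.1 hc.2.1).2.1; rwa [hc.2.2] at this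
                exact no3 seed c c1 c2 (Asymm _ _ hAc) (Asymm _ _ hAc1) (Asymm _ _ hAc2)
                  hcc1 hcc2 hne21.symm
      · rw [List.isChain_append]
        refine ⟨List.isChain_reverse.mpr (List.IsChain.imp (fun a b hab => Asymm a b hab) sp1c), ?_, ?_⟩
        · rw [List.isChain_cons]
          refine ⟨?_, sp2c⟩
          intro y hy
          rw [sp2h] at hy; cases hy
          exact Asymm _ _ hAc2
        · intro x hx y hy
          rw [List.getLast?_reverse, sp1h] at hx
          cases hx
          simp only [List.head?_cons] at hy
          cases hy
          exact hAc1
      · exact List.mem_append.mpr (Or.inr (List.mem_cons_self))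
    · -- one child
      refine ⟨seed :: L1, ?_, ?_, ?_, List.mem_cons_self⟩
      · rw [List.nodup_cons]
        exact ⟨fun h => (sp1m seed h).2.1 rfl, hnd1⟩
      · intro s
        constructor
        · intro hs
          rcases List.mem_cons.mp hs with h | h
          · rw [h]; exact hseed
          · exact (sp1m s h).1
        · intro hs
          by_cases hss : s = seed
          · subst hss; exact List.mem_cons_self
          · obtain ⟨c, m, hc, hm, hcond⟩ := anc s hs hss
            have hcc1 : c = c1 := by
              by_contra hcc
              exact h2ex ⟨c, hc, hcc⟩
            subst hcc1
            exact List.mem_cons_of_mem _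
              (descend L1 sp1clo m s hcond (hm ▸ head_mem _ _ sp1h))
      · rw [List.isChain_cons]
        refine ⟨?_, sp1c⟩
        intro y hy
        rw [sp1h] at hy; cases hy
        exact Asymm _ _ hAc1
  · -- no children: C = {seed}
    refine ⟨[seed], List.nodup_singleton _, ?_, List.isChain_singleton _,
      List.mem_singleton_self _⟩
    intro s
    constructor
    · intro hs; rw [List.mem_singleton] at hs; rw [hs]; exact hseed
    · intro hs
      rw [List.mem_singleton]
      by_contra hss
      obtain ⟨c, m, hc, -, -⟩ := anc s hs hss
      exact h1ex ⟨c, hc⟩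

end Engine

namespace LinkDiagram

variable {D : LinkDiagram}

theorem adj_symm {s t : D.Strand} (h : D.Adj s t) : D.Adj t s := by
  obtain ⟨c, hc⟩ := h
  exact ⟨c, hc.symm⟩

theorem crossing_count (hdist : ∀ c : D.Crossing, D.under1 c ≠ D.under2 c)
    (s : D.Strand) :
    (Finset.univ.filter (fun c => D.under1 c = s ∨ D.under2 c = s)).card = 2 := by
  classical
  have h1 : Nat.card {c : D.Crossing // D.under1 c = s} =
      (Finset.univ.filter (fun c => D.under1 c = s)).card := by
    rw [Nat.card_eq_fintype_card, Fintype.card_subtype]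
  have h2 : Nat.card {c : D.Crossing // D.under2 c = s} =
      (Finset.univ.filter (fun c => D.under2 c = s)).card := by
    rw [Nat.card_eq_fintype_card, Fintype.card_subtype]
  have hd : Disjoint (Finset.univ.filter (fun c => D.under1 c = s))
      (Finset.univ.filter (fun c => D.under2 c = s)) := by
    rw [Finset.disjoint_left]
    intro c hc1 hc2
    simp only [Finset.mem_filter, Finset.mem_univ, true_and] at hc1 hc2
    exact hdist c (hc1.trans hc2.symm)
  rw [Finset.filter_or, Finset.card_union_of_disjoint hd, ← h1, ← h2]
  exact D.under_twice s

theorem no_three_crossings (hdist : ∀ c : D.Crossing, D.under1 c ≠ D.under2 c)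
    (s : D.Strand) (c1 c2 c3 : D.Crossing)
    (h1 : D.under1 c1 = s ∨ D.under2 c1 = s)
    (h2 : D.under1 c2 = s ∨ D.under2 c2 = s)
    (h3 : D.under1 c3 = s ∨ D.under2 c3 = s)
    (h12 : c1 ≠ c2) (h13 : c1 ≠ c3) (h23 : c2 ≠ c3) : False := by
  classical
  have hsub : ({c1, c2, c3} : Finset D.Crossing) ⊆
      Finset.univ.filter (fun c => D.under1 c = s ∨ D.under2 c = s) := by
    intro c hc
    simp only [Finset.mem_insert, Finset.mem_singleton] at hc
    simp only [Finset.mem_filter, Finset.mem_univ, true_and]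
    rcases hc with h | h | h <;> subst h <;> assumption
  have hcard : ({c1, c2, c3} : Finset D.Crossing).card = 3 :=
    Finset.card_eq_three.mpr ⟨c1, c2, c3, h12, h13, h23, rfl⟩
  have := Finset.card_le_card hsub
  rw [hcard, crossing_count hdist] at this
  omega

theorem no_self_adj (hdist : ∀ c : D.Crossing, D.under1 c ≠ D.under2 c)
    (s : D.Strand) : ¬ D.Adj s s := by
  rintro ⟨c, hc⟩
  rcases hc with ⟨ha, hb⟩ | ⟨ha, hb⟩ <;> exact hdist c (ha.trans hb.symm)

theorem no_three_adj (hdist : ∀ c : D.Crossing, D.under1 c ≠ D.under2 c)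
    (s u v w : D.Strand) (hu : D.Adj s u) (hv : D.Adj s v) (hw : D.Adj s w)
    (huv : u ≠ v) (huw : u ≠ w) (hvw : v ≠ w) : False := by
  obtain ⟨cu, hcu⟩ := hu
  obtain ⟨cv, hcv⟩ := hv
  obtain ⟨cw, hcw⟩ := hw
  have key : ∀ (x y : D.Strand) (c : D.Crossing),
      ((D.under1 c = s ∧ D.under2 c = x) ∨ (D.under1 c = x ∧ D.under2 c = s)) →
      ((D.under1 c = s ∧ D.under2 c = y) ∨ (D.under1 c = y ∧ D.under2 c = s)) →
      x = y := by
    intro x y c hx hy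
    rcases hx with ⟨ha, hb⟩ | ⟨ha, hb⟩ <;> rcases hy with ⟨hc', hd⟩ | ⟨hc', hd⟩
    · exact hb.symm.trans hd
    · exact absurd (ha.trans hd.symm) (hdist c)
    · exact absurd (hc'.trans hb.symm) (hdist c)
    · exact ha.symm.trans hc'
  have hcuv : cu ≠ cv := fun e => huv (key u v cu hcu (e ▸ hcv))
  have hcuw : cu ≠ cw := fun e => huw (key u w cu hcu (e ▸ hcw))
  have hcvw : cv ≠ cw := fun e => hvw (key v w cv hcv (e ▸ hcw))
  refine no_three_crossings hdist s cu cv cw ?_ ?_ ?_ hcuv hcuw hcvw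
  · rcases hcu with ⟨ha, _⟩ | ⟨_, hb⟩; exact Or.inl ha; exact Or.inr hb
  · rcases hcv with ⟨ha, _⟩ | ⟨_, hb⟩; exact Or.inl ha; exact Or.inr hb
  · rcases hcw with ⟨ha, _⟩ | ⟨_, hb⟩; exact Or.inl ha; exact Or.inr hb

theorem exists_adj (hdist : ∀ c : D.Crossing, D.under1 c ≠ D.under2 c)
    (s : D.Strand) : ∃ u, D.Adj s u ∧ u ≠ s := by
  classical
  have h := crossing_count hdist s
  have hne : (Finset.univ.filter (fun c => D.under1 c = s ∨ D.under2 c = s)).Nonempty := by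
    rw [← Finset.card_pos, h]; omega
  obtain ⟨c, hc⟩ := hne
  simp only [Finset.mem_filter, Finset.mem_univ, true_and] at hc
  rcases hc with h1 | h2
  · exact ⟨D.under2 c, ⟨c, Or.inl ⟨h1, rfl⟩⟩, fun e => hdist c (h1.trans e.symm)⟩
  · exact ⟨D.under1 c, ⟨c, Or.inr ⟨rfl, h2⟩⟩, fun e => hdist c (e.trans h2.symm)⟩

theorem component_closed {s v w : D.Strand} (hv : v ∈ D.component s)
    (hadj : D.Adj v w) : w ∈ D.component s :=
  Relation.ReflTransGen.tail hv hadj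

namespace ColoringProcess

variable {k : ℕ} (p : ColoringProcess D k)

theorem persist {i i' : ℕ} (hle : i ≤ i') (hi' : i' ≤ D.n - k) {s : D.Strand}
    {x : Fin k} (hx : p.f i s = some x) : p.f i' s = some x := by
  induction i', hle using Nat.le_induction with
  | base => exact hx
  | succ n hn ih =>
    have hfn : p.f n s = some x := ih (by omega)
    by_cases hne : s = p.newStrand n
    · have := p.move_none n (by omega)
      rw [← hne, hfn] at this
      simp at this
    · rw [p.move_eq n (by omega) s hne]
      exact hfn

theorem seed_final (j : Fin k) : p.f (D.n - k) (p.seed j) = some j :=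
  p.persist (Nat.zero_le _) (le_refl _) (p.f0_seed j)

theorem classify (s : D.Strand) :
    (∃ j', s = p.seed j' ∧ p.f 0 s = some j') ∨
    (∃ i, i < D.n - k ∧ s = p.newStrand i ∧ p.f i s = none ∧
      (p.f (i+1) s).isSome ∧ ∀ b' ≤ i, p.f b' s = none) := by
  classical
  have hex : ∃ b, (p.f b s).isSome := ⟨D.n - k, p.final s⟩
  set b := Nat.find hex with hb
  have hbsome : (p.f b s).isSome := Nat.find_spec hex
  have hbmin : ∀ b' < b, p.f b' s = none := by
    intro b' hb'
    have := Nat.find_min hex hb'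
    exact Option.not_isSome_iff_eq_none.mp this
  have hble : b ≤ D.n - k := Nat.find_min' hex (p.final s)
  cases hbb : b with
  | zero =>
    left
    rw [hbb] at hbsome
    by_cases hsd : ∃ j', p.seed j' = s
    · obtain ⟨j', hj'⟩ := hsd
      exact ⟨j', hj'.symm, hj' ▸ p.f0_seed j'⟩
    · push_neg at hsd
      rw [p.f0_none s hsd] at hbsome
      simp at hbsome
  | succ i =>
    right
    rw [hbb] at hbsome hbmin hble
    have hilt : i < D.n - k := by omega
    have hnone : p.f i s = none := hbmin i (by omega)
    have hnew : s = p.newStrand i := by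
      by_contra hne
      have := p.move_eq i hilt s hne
      rw [hnone] at this
      rw [this] at hbsome
      simp at hbsome
    exact ⟨i, hilt, hnew, hnone, hbsome, fun b' hb' => hbmin b' (by omega)⟩

theorem h_ge (h : D.Strand → ℤ) (hh : IsHeightFunction p h) {i : ℕ}
    (hi : i ≤ D.n - k) {s : D.Strand} (hs : (p.f i s).isSome) :
    -((k : ℤ) + i) ≤ h s := by
  rcases p.classify s with ⟨j', hj', -⟩ | ⟨i0, hi0, hnew, hnone, -, -⟩
  · rw [hj', hh.1 j']
    have := j'.isLt
    omega
  · have hlt : i0 < i := by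
      by_contra hge
      obtain ⟨x, hx⟩ := Option.isSome_iff_exists.mp hs
      have := p.persist (by omega : i ≤ i0) (by omega) hx
      rw [hnone] at this
      simp at this
    rw [hnew, hh.2 i0 hi0]
    omega

theorem parent_lemma (h : D.Strand → ℤ) (hh : IsHeightFunction p h) (j : Fin k)
    {s : D.Strand} (hs : p.f (D.n - k) s = some j) (hns : s ≠ p.seed j) :
    ∃ u, p.f (D.n - k) u = some j ∧ D.Adj s u ∧ h s < h u := by
  rcases p.classify s with ⟨j', hj', hf0⟩ | ⟨i, hi, hnew, hnone, hsome, -⟩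
  · exfalso
    have := p.persist (Nat.zero_le _) (le_refl _) hf0
    rw [hs] at this
    exact hns (by rw [hj', show j' = j from (Option.some.inj this).symm])
  · obtain ⟨c, si, hund, hsisome, -, heq⟩ := p.move_adj i hi
    obtain ⟨x, hx⟩ := Option.isSome_iff_exists.mp hsome
    have hxj : x = j := by
      have := p.persist (by omega : i + 1 ≤ D.n - k) (le_refl _) hx
      rw [hs] at this
      exact (Option.some.inj this).symm
    subst hxj
    have hsij : p.f i si = some x := by
      rw [← heq, ← hnew, hx]
    refine ⟨si, p.persist (by omega : i ≤ D.n - k) (le_refl _) hsij, ?_, ?_⟩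
    · rw [hnew]
      rcases hund with ⟨h1, h2⟩ | ⟨h1, h2⟩
      · exact ⟨c, Or.inl ⟨h1, h2⟩⟩
      · exact ⟨c, Or.inr ⟨h1, h2⟩⟩
    · have hge : -((k : ℤ) + i) ≤ h si :=
        p.h_ge h hh (by omega) (Option.isSome_iff_exists.mpr ⟨x, hsij⟩)
      rw [hnew, hh.2 i hi]
      omega

theorem seed_max (h : D.Strand → ℤ) (hh : IsHeightFunction p h) (j : Fin k)
    {s : D.Strand} (hs : p.f (D.n - k) s = some j) (hns : s ≠ p.seed j) :
    h s < h (p.seed j) := by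
  rcases p.classify s with ⟨j', hj', hf0⟩ | ⟨i, hi, hnew, -, -, -⟩
  · exfalso
    have := p.persist (Nat.zero_le _) (le_refl _) hf0
    rw [hs] at this
    exact hns (by rw [hj', show j' = j from (Option.some.inj this).symm])
  · rw [hnew, hh.2 i hi, hh.1 j]
    have := j.isLt
    omega

end ColoringProcess

end LinkDiagram

/-- Let `D` be a link diagram with distinct understrands at every
crossing, `k`-meridionally colorable, with final coloring `p.final'` and height
function `h`.  For every color `j`: if the color class is a proper subset of the
connected component containing it, it can be ordered as a path with consecutive strands
adjacent, and in any such ordering `h` has a unique local maximum, at the seed of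
color `j`; if the color class is an entire connected component, then in the cyclic
ordering of that component by adjacency `h` has a unique local maximum (neighbours
taken cyclically), again at the seed of color `j`. -/
theorem wirtinger_link_unique_localMax (D : LinkDiagram)
    (hdist : ∀ c : D.Crossing, D.under1 c ≠ D.under2 c)
    (k : ℕ) (p : LinkDiagram.ColoringProcess D k)
    (h : D.Strand → ℤ) (hh : LinkDiagram.IsHeightFunction p h) (j : Fin k) :
    ({s : D.Strand | p.final' s = some j} ⊂ D.component (p.seed j) →
      (∃ (a : ℕ) (t : Fin a → D.Strand),
          D.IsPathOrdering {s : D.Strand | p.final' s = some j} a t) ∧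
      (∀ (a : ℕ) (t : Fin a → D.Strand),
          D.IsPathOrdering {s : D.Strand | p.final' s = some j} a t →
          (∃! m : Fin a, D.IsPathLocalMax h a t m) ∧
          (∀ m : Fin a, D.IsPathLocalMax h a t m → t m = p.seed j))) ∧
    ({s : D.Strand | p.final' s = some j} = D.component (p.seed j) →
      (∃ (a : ℕ) (ha : 0 < a) (t : Fin a → D.Strand),
          D.IsCycleOrdering {s : D.Strand | p.final' s = some j} a ha t) ∧
      (∀ (a : ℕ) (ha : 0 < a) (t : Fin a → D.Strand),
          D.IsCycleOrdering {s : D.Strand | p.final' s = some j} a ha t →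
          (∃! m : Fin a, D.IsCycLocalMax h a ha t m) ∧
          (∀ m : Fin a, D.IsCycLocalMax h a ha t m → t m = p.seed j))) := by
  classical
  set C : Set D.Strand := {s : D.Strand | p.final' s = some j} with hCdef
  have hCf : ∀ s, s ∈ C ↔ p.f (D.n - k) s = some j := fun s => Iff.rfl
  have seedC : p.seed j ∈ C := (hCf _).mpr (p.seed_final j)
  have hsym : ∀ a b : D.Strand, D.Adj a b → D.Adj b a := fun a b => LinkDiagram.adj_symm
  have hno3 : ∀ s u v w : D.Strand, D.Adj s u → D.Adj s v → D.Adj s w →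
      u ≠ v → u ≠ w → v ≠ w → False := LinkDiagram.no_three_adj hdist
  have hnself : ∀ s : D.Strand, ¬ D.Adj s s := LinkDiagram.no_self_adj hdist
  have hparC : ∀ s, s ∈ C → s ≠ p.seed j → ∃ u, u ∈ C ∧ D.Adj s u ∧ h s < h u := by
    intro s hs hns
    obtain ⟨u, hu1, hu2, hu3⟩ := p.parent_lemma h hh j ((hCf s).mp hs) hns
    exact ⟨u, (hCf u).mpr hu1, hu2, hu3⟩
  have hmax : ∀ s, s ∈ C → s ≠ p.seed j → h s < h (p.seed j) := fun s hs hns =>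
    p.seed_max h hh j ((hCf s).mp hs) hns
  obtain ⟨L, hLnd, hLmem, hLch, hLseed⟩ :=
    exists_path_list D.Adj C (p.seed j) h hsym hno3 seedC hparC
  have hpath : D.IsPathOrdering C L.length (fun i => L.get i) := by
    refine ⟨List.nodup_iff_injective_get.mp hLnd, ?_, ?_⟩
    · ext s
      simp only [Set.mem_range]
      rw [← hLmem s]
      constructor
      · rintro ⟨i, rfl⟩
        exact L.get_mem i
      · intro hs
        obtain ⟨i, hi⟩ := List.mem_iff_get.mp hs
        exact ⟨i, hi⟩
    · intro i hi
      exact List.isChain_iff_getElem.mp hLch i.1 (by omega)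
  constructor
  · -- path case
    intro hss
    refine ⟨⟨L.length, _, hpath⟩, ?_⟩
    rintro a t ⟨tinj, trange, tadj⟩
    have tne : ∀ x y : Fin a, (x : ℕ) ≠ (y : ℕ) → t x ≠ t y :=
      fun x y hxy e => hxy (congrArg Fin.val (tinj e))
    have trg : ∀ x : Fin a, t x ∈ C := by
      intro x; rw [← trange]; exact ⟨x, rfl⟩
    have hclosure : ∀ (h0 : 0 < a) (hA : a - 1 < a),
        D.Adj (t ⟨0, h0⟩) (t ⟨a-1, hA⟩) → 3 ≤ a → False := by
      intro h0 hA hextra ha3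
      have hsub : D.component (p.seed j) ⊆ C := by
        intro v hv
        induction hv with
        | refl => exact seedC
        | tail hab hadj ih =>
          rename_i b' c'
          by_contra hcC
          obtain ⟨x, hx⟩ : b' ∈ Set.range t := by rw [trange]; exact ih
          rw [← hx] at hadj
          rcases Nat.eq_or_lt_of_le (Nat.zero_le (x : ℕ)) with hX0 | hXpos
          · -- x = 0
            have hx0 : x = ⟨0, h0⟩ := Fin.ext hX0.symm
            refine hno3 (t x) (t ⟨1, by omega⟩) (t ⟨a-1, hA⟩) c' ?_ ?_ hadj
              (tne _ _ (by simp <;> omega)) ?_ ?_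
            · rw [hx0]
              have := tadj ⟨0, h0⟩ (by simp <;> omega)
              convert this using 2
            · rw [hx0]; exact hextra
            · intro e; exact hcC (e ▸ trg ⟨1, by omega⟩)
            · intro e; exact hcC (e ▸ trg ⟨a-1, hA⟩)
          · rcases Nat.lt_or_ge ((x : ℕ) + 1) a with hXa | hXa
            · -- interior
              refine hno3 (t x) (t ⟨(x:ℕ)-1, by omega⟩) (t ⟨(x:ℕ)+1, hXa⟩) c' ?_
                (tadj x hXa) hadj (tne _ _ (by simp <;> omega)) ?_ ?_
              · apply hsym
                have := tadj ⟨(x:ℕ)-1, by omega⟩ (by simp <;> omega)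
                convert this using 2
                exact Fin.ext (by simp <;> omega)
              · intro e; exact hcC (e ▸ trg _)
              · intro e; exact hcC (e ▸ trg _)
            · -- x = a-1
              have hxlt := x.isLt
              have hxa : x = ⟨a-1, hA⟩ := Fin.ext (by simp <;> omega)
              refine hno3 (t x) (t ⟨a-2, by omega⟩) (t ⟨0, h0⟩) c' ?_ ?_ hadj
                (tne _ _ (by simp <;> omega)) ?_ ?_
              · apply hsym
                have := tadj ⟨a-2, by omega⟩ (by simp <;> omega)
                convert this using 2
                · exact Fin.ext (by simp <;> omega)
              · rw [hxa]; exact hsym _ _ hextra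
              · intro e; exact hcC (e ▸ trg _)
              · intro e; exact hcC (e ▸ trg _)
      have : C = D.component (p.seed j) := Set.Subset.antisymm hss.1 hsub
      exact hss.2 (this ▸ Set.Subset.refl _)
    have hat : ∀ m : Fin a, D.IsPathLocalMax h a t m → t m = p.seed j := by
      intro m hm
      by_contra hms
      obtain ⟨u, huC, huA, huh⟩ := hparC (t m) (trg m) hms
      obtain ⟨i, hi⟩ : u ∈ Set.range t := by rw [trange]; exact huC
      rw [← hi] at huA huh
      have hIM : (i : ℕ) ≠ (m : ℕ) := by
        intro he
        exact hnself (t m) (by rw [show m = i from Fin.ext he.symm] at huA ⊢; exact huA)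
      have hne1 : (i : ℕ) ≠ (m : ℕ) + 1 := by
        intro he
        have hlt : (m : ℕ) + 1 < a := he ▸ i.isLt
        have h1 := hm.1 hlt
        rw [show (⟨(m:ℕ)+1, hlt⟩ : Fin a) = i from Fin.ext he.symm] at h1
        omega
      have hne2 : ¬(0 < (m : ℕ) ∧ (i : ℕ) = (m : ℕ) - 1) := by
        rintro ⟨hpos, he⟩
        have h2 := hm.2 hpos
        rw [show (⟨(m:ℕ)-1, lt_of_le_of_lt (Nat.sub_le _ _) m.isLt⟩ : Fin a) = i
          from Fin.ext he.symm] at h2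
        omega
      by_cases hM0 : (m : ℕ) = 0
      · have hI2 : 2 ≤ (i : ℕ) := by omega
        by_cases hIa : (i : ℕ) + 1 < a
        · refine hno3 (t i) (t ⟨(i:ℕ)-1, by omega⟩) (t ⟨(i:ℕ)+1, hIa⟩) (t m) ?_
            (tadj i hIa) (hsym _ _ huA) (tne _ _ (by simp <;> omega))
            (tne _ _ (by simp <;> omega)) (tne _ _ (by simp <;> omega))
          · apply hsym
            have := tadj ⟨(i:ℕ)-1, by omega⟩ (by simp <;> omega)
            convert this using 2
            exact Fin.ext (by simp <;> omega)
        · have hIa1 : (i : ℕ) = a - 1 := by have := i.isLt; omega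
          refine hclosure (by omega) (by omega) ?_ (by omega)
          have e1 : (⟨0, by omega⟩ : Fin a) = m := Fin.ext (by simp <;> omega)
          have e2 : (⟨a-1, by omega⟩ : Fin a) = i := Fin.ext (by simp <;> omega)
          rw [e1, e2]
          exact huA
      · by_cases hMa : (m : ℕ) + 1 < a
        · refine hno3 (t m) (t ⟨(m:ℕ)-1, by omega⟩) (t ⟨(m:ℕ)+1, hMa⟩) (t i) ?_
            (tadj m hMa) huA (tne _ _ (by simp <;> omega)) (tne _ _ (by simp <;> omega))
            (tne _ _ (by simp <;> omega))
          · apply hsym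
            have := tadj ⟨(m:ℕ)-1, by omega⟩ (by simp <;> omega)
            convert this using 2
            exact Fin.ext (by simp <;> omega)
        · have hMa1 : (m : ℕ) = a - 1 := by have := m.isLt; omega
          have hIle : (i : ℕ) + 2 ≤ (m : ℕ) := by have := i.isLt; omega
          by_cases hI0 : (i : ℕ) = 0
          · refine hclosure (by omega) (by omega) ?_ (by omega)
            have e1 : (⟨0, by omega⟩ : Fin a) = i := Fin.ext (by simp <;> omega)
            have e2 : (⟨a-1, by omega⟩ : Fin a) = m := Fin.ext (by simp <;> omega)
            rw [e1, e2]
            exact hsym _ _ huA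
          · refine hno3 (t i) (t ⟨(i:ℕ)-1, by omega⟩) (t ⟨(i:ℕ)+1, by omega⟩) (t m) ?_
              (tadj i (by omega)) (hsym _ _ huA) (tne _ _ (by simp <;> omega))
              (tne _ _ (by simp <;> omega)) (tne _ _ (by simp <;> omega))
            · apply hsym
              have := tadj ⟨(i:ℕ)-1, by omega⟩ (by simp <;> omega)
              convert this using 2
              exact Fin.ext (by simp <;> omega)
    obtain ⟨m0, hm0⟩ : p.seed j ∈ Set.range t := by rw [trange]; exact seedC
    have hm0max : D.IsPathLocalMax h a t m0 := by
      constructor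
      · intro hma
        rw [hm0]
        exact hmax _ (trg _) (fun e => tne _ _ (by simp <;> omega) (e.trans hm0.symm))
      · intro hpos
        rw [hm0]
        exact hmax _ (trg _) (fun e => tne _ _ (by simp <;> omega) (e.trans hm0.symm))
    exact ⟨⟨m0, hm0max, fun y hy => tinj ((hat y hy).trans hm0.symm)⟩, hat⟩
  · -- cycle case
    intro heq
    have hCclosed : ∀ v w, v ∈ C → D.Adj v w → w ∈ C := by
      intro v w hv hadj
      rw [heq] at hv ⊢
      exact Relation.ReflTransGen.tail hv hadj
    have hclose : ∀ (a : ℕ) (t : Fin a → D.Strand), D.IsPathOrdering C a t →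
        2 ≤ a → ∀ (hA : a - 1 < a) (h0 : 0 < a), D.Adj (t ⟨a-1, hA⟩) (t ⟨0, h0⟩) := by
      rintro a t ⟨tinj, trange, tadj⟩ ha2 hA h0
      have tne : ∀ x y : Fin a, (x : ℕ) ≠ (y : ℕ) → t x ≠ t y :=
        fun x y hxy e => hxy (congrArg Fin.val (tinj e))
      have trg : ∀ x : Fin a, t x ∈ C := by
        intro x; rw [← trange]; exact ⟨x, rfl⟩
      rcases Nat.lt_or_ge a 3 with ha3 | ha3
      · -- a = 2
        apply hsym
        have := tadj ⟨0, h0⟩ (by simp <;> omega)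
        convert this using 2
        exact Fin.ext (by simp <;> omega)
      · set e := t ⟨a-1, hA⟩ with he
        have hedge : D.Adj (t ⟨a-2, by omega⟩) e := by
          rw [he]
          have := tadj ⟨a-2, by omega⟩ (by simp <;> omega)
          convert this using 2
          exact Fin.ext (by simp <;> omega)
        obtain ⟨c0, hc0⟩ := hedge
        have hcc := LinkDiagram.crossing_count hdist e
        obtain ⟨c1, c2, hc12, hcset⟩ := Finset.card_eq_two.mp hcc
        have hc1e : D.under1 c1 = e ∨ D.under2 c1 = e := by
          have hmm : c1 ∈ Finset.univ.filter (fun c => D.under1 c = e ∨ D.under2 c = e) := by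
            rw [hcset]; simp
          simpa using hmm
        have hc2e : D.under1 c2 = e ∨ D.under2 c2 = e := by
          have hmm : c2 ∈ Finset.univ.filter (fun c => D.under1 c = e ∨ D.under2 c = e) := by
            rw [hcset]; simp
          simpa using hmm
        have hc0e : D.under1 c0 = e ∨ D.under2 c0 = e := by
          rcases hc0 with ⟨h1, h2⟩ | ⟨h1, h2⟩
          · exact Or.inr h2
          · exact Or.inl h1
        have hc0mem : c0 = c1 ∨ c0 = c2 := by
          have hmm : c0 ∈ ({c1, c2} : Finset D.Crossing) := by
            rw [← hcset]
            simp only [Finset.mem_filter, Finset.mem_univ, true_and]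
            exact hc0e
          simpa using hmm
        obtain ⟨c', hc'e, hc'0⟩ : ∃ c', (D.under1 c' = e ∨ D.under2 c' = e) ∧ c' ≠ c0 := by
          rcases hc0mem with hq | hq
          · exact ⟨c2, hc2e, by rw [hq]; exact hc12.symm⟩
          · exact ⟨c1, hc1e, by rw [hq]; exact hc12⟩
        obtain ⟨u, huA, hune, hund⟩ : ∃ u, D.Adj e u ∧ u ≠ e ∧
            ((D.under1 c' = e ∧ D.under2 c' = u) ∨ (D.under1 c' = u ∧ D.under2 c' = e)) := by
          rcases hc'e with h1 | h2
          · exact ⟨D.under2 c', ⟨c', Or.inl ⟨h1, rfl⟩⟩,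
              fun ee => hdist c' (h1.trans ee.symm), Or.inl ⟨h1, rfl⟩⟩
          · exact ⟨D.under1 c', ⟨c', Or.inr ⟨rfl, h2⟩⟩,
              fun ee => hdist c' (ee.trans h2.symm), Or.inr ⟨rfl, h2⟩⟩
        have huC : u ∈ C := hCclosed e u (by rw [he]; exact trg _) huA
        obtain ⟨x, hx⟩ : u ∈ Set.range t := by rw [trange]; exact huC
        have hxlt := x.isLt
        by_cases hX0 : (x:ℕ) = 0
        · have hxx : x = ⟨0, h0⟩ := Fin.ext (by simp <;> omega)
          rw [← hxx, hx]
          exact huA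
        · exfalso
          have hXa1 : (x:ℕ) ≠ a - 1 := by
            intro hxx
            refine hune (hx.symm.trans ?_)
            rw [he]; congr 1; exact Fin.ext (by simp <;> omega)
          by_cases hXa2 : (x:ℕ) = a - 2
          · have hue : u = t ⟨a-2, by omega⟩ := by
              rw [← hx]; congr 1; exact Fin.ext (by simp <;> omega)
            have hedge3 : D.Adj (t ⟨a-3, by omega⟩) (t ⟨a-2, by omega⟩) := by
              have := tadj ⟨a-3, by omega⟩ (by simp <;> omega)
              convert this using 2
              exact Fin.ext (by simp <;> omega)
            obtain ⟨c3, hc3⟩ := hedge3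
            have hnea3 : t ⟨a-3, by omega⟩ ≠ e := by
              rw [he]; exact tne _ _ (by simp <;> omega)
            have hnea2 : t ⟨a-2, by omega⟩ ≠ e := by
              rw [he]; exact tne _ _ (by simp <;> omega)
            have hc30 : c3 ≠ c0 := by
              intro hq
              subst hq
              rcases hc3 with ⟨h1, h2⟩ | ⟨h1, h2⟩ <;> rcases hc0 with ⟨h3, h4⟩ | ⟨h3, h4⟩
              · exact hnea2 (h2.symm.trans h4)
              · exact hnea3 (h1.symm.trans h3)
              · exact hnea3 (h2.symm.trans h4)
              · exact hnea2 (h1.symm.trans h3)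
            have hundd : (D.under1 c' = e ∧ D.under2 c' = t ⟨a-2, by omega⟩) ∨
                (D.under1 c' = t ⟨a-2, by omega⟩ ∧ D.under2 c' = e) := by
              rw [← hue]; exact hund
            have hc3' : c3 ≠ c' := by
              intro hq
              subst hq
              rcases hc3 with ⟨h1, h2⟩ | ⟨h1, h2⟩ <;> rcases hundd with ⟨h3, h4⟩ | ⟨h3, h4⟩
              · exact hnea3 (h1.symm.trans h3)
              · exact hnea2 (h2.symm.trans h4)
              · exact hnea2 (h1.symm.trans h3)
              · exact hnea3 (h2.symm.trans h4)
            refine LinkDiagram.no_three_crossings hdist (t ⟨a-2, by omega⟩) c0 c' c3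
              ?_ ?_ ?_ (Ne.symm hc'0) (Ne.symm hc30) (Ne.symm hc3')
            · rcases hc0 with ⟨h1, h2⟩ | ⟨h1, h2⟩
              · exact Or.inl h1
              · exact Or.inr h2
            · rcases hundd with ⟨h1, h2⟩ | ⟨h1, h2⟩
              · exact Or.inr h2
              · exact Or.inl h1
            · rcases hc3 with ⟨h1, h2⟩ | ⟨h1, h2⟩
              · exact Or.inr h2
              · exact Or.inl h1
          · refine hno3 (t x) (t ⟨(x:ℕ)-1, by omega⟩) (t ⟨(x:ℕ)+1, by omega⟩) e ?_
              (tadj x (by omega)) ?_ (tne _ _ (by simp <;> omega)) ?_ ?_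
            · apply hsym
              have := tadj ⟨(x:ℕ)-1, by omega⟩ (by simp <;> omega)
              convert this using 2
              exact Fin.ext (by simp <;> omega)
            · rw [← hx] at huA
              exact hsym _ _ huA
            · rw [he]; exact tne _ _ (by simp <;> omega)
            · rw [he]; exact tne _ _ (by simp <;> omega)
    obtain ⟨a2u, ha2uA, ha2une⟩ := LinkDiagram.exists_adj hdist (p.seed j)
    have ha2uC : a2u ∈ C := by
      rw [heq]; exact Relation.ReflTransGen.single ha2uA
    have hLa2 : 2 ≤ L.length := by
      obtain ⟨iu, hiu⟩ : a2u ∈ Set.range (fun i : Fin L.length => L.get i) := by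
        rw [hpath.2.1]; exact ha2uC
      obtain ⟨is', his⟩ : p.seed j ∈ Set.range (fun i : Fin L.length => L.get i) := by
        rw [hpath.2.1]; exact seedC
      by_contra hle
      have hiult := iu.isLt
      have hislt := is'.isLt
      have : iu = is' := Fin.ext (by omega)
      rw [this, his] at hiu
      exact ha2une hiu.symm
    constructor
    · -- existence of a cycle ordering
      refine ⟨L.length, by omega, (fun i => L.get i), hpath.1, hpath.2.1, ?_⟩
      intro i
      have hilt := i.isLt
      rcases Nat.lt_or_ge ((i:ℕ)+1) L.length with hlt | hge
      · convert hpath.2.2 i hlt using 2 <;> exact Fin.ext (Nat.mod_eq_of_lt hlt)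
      · have hlast := hclose L.length (fun i => L.get i) hpath hLa2 (by omega) (by omega)
        convert hlast using 2
        · exact Fin.ext (by simp <;> omega)
        · exact Fin.ext (by
            show ((i:ℕ)+1) % L.length = 0
            rw [show (i:ℕ)+1 = L.length by omega]
            exact Nat.mod_self _)
    · -- uniqueness in any cycle ordering
      rintro a ha t ⟨tinj, trange, tadj⟩
      have tne : ∀ x y : Fin a, (x : ℕ) ≠ (y : ℕ) → t x ≠ t y :=
        fun x y hxy e => hxy (congrArg Fin.val (tinj e))
      have trg : ∀ x : Fin a, t x ∈ C := by
        intro x; rw [← trange]; exact ⟨x, rfl⟩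
      rcases Nat.lt_or_ge a 2 with ha1 | ha2
      · exfalso
        apply hnself (t ⟨0, ha⟩)
        have := tadj ⟨0, ha⟩
        convert this using 2
        all_goals
          exact Fin.ext (by
            show (0:ℕ) = ((0:ℕ)+1) % a
            rw [show a = 1 by omega])
      · have modsucc : ∀ M : ℕ, M < a → (M+1) % a = if M+1 = a then 0 else M+1 := by
          intro M hM
          by_cases hq : M+1 = a
          · rw [if_pos hq, hq, Nat.mod_self]
          · rw [if_neg hq]
            exact Nat.mod_eq_of_lt (by omega)
        have modpred : ∀ M : ℕ, M < a → (M + a - 1) % a = if M = 0 then a-1 else M-1 := by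
          intro M hM
          by_cases hq : M = 0
          · rw [if_pos hq, hq, show 0 + a - 1 = a - 1 by omega]
            exact Nat.mod_eq_of_lt (by omega)
          · rw [if_neg hq, show M + a - 1 = (M-1) + a by omega, Nat.add_mod_right]
            exact Nat.mod_eq_of_lt (by omega)
        have modcyc : ∀ M : ℕ, M < a → ((M + a - 1) % a + 1) % a = M := by
          intro M hM
          rw [Nat.mod_add_mod, show M + a - 1 + 1 = M + a by omega, Nat.add_mod_right]
          exact Nat.mod_eq_of_lt hM
        have hat : ∀ m : Fin a, D.IsCycLocalMax h a ha t m → t m = p.seed j := by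
          intro m hm
          by_contra hms
          have hmlt := m.isLt
          obtain ⟨u, huC, huA, huh⟩ := hparC (t m) (trg m) hms
          obtain ⟨i, hi⟩ : u ∈ Set.range t := by rw [trange]; exact huC
          rw [← hi] at huA huh
          have hilt := i.isLt
          have hIM : (i:ℕ) ≠ (m:ℕ) := by
            intro he
            apply hnself (t m)
            rw [show i = m from Fin.ext he] at huA
            exact huA
          have hIp1 : (i:ℕ) ≠ ((m:ℕ)+1) % a := by
            intro he
            have h1 := hm.1
            rw [show (⟨((m:ℕ)+1) % a, Nat.mod_lt _ ha⟩ : Fin a) = i from Fin.ext he.symm] at h1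
            omega
          have hIp2 : (i:ℕ) ≠ ((m:ℕ)+a-1) % a := by
            intro he
            have h2 := hm.2
            rw [show (⟨((m:ℕ)+a-1) % a, Nat.mod_lt _ ha⟩ : Fin a) = i from Fin.ext he.symm] at h2
            omega
          have hp1v := modsucc (m:ℕ) hmlt
          have hp2v := modpred (m:ℕ) hmlt
          rcases Nat.lt_or_ge a 3 with ha3 | ha3
          · by_cases hq : (m:ℕ)+1 = a
            · rw [if_pos hq] at hp1v; omega
            · rw [if_neg hq] at hp1v; omega
          · have hp12 : ((m:ℕ)+1) % a ≠ ((m:ℕ)+a-1) % a := by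
              by_cases hq : (m:ℕ)+1 = a
              · rw [if_pos hq] at hp1v
                by_cases hq0 : (m:ℕ) = 0
                · omega
                · rw [if_neg hq0] at hp2v; omega
              · rw [if_neg hq] at hp1v
                by_cases hq0 : (m:ℕ) = 0
                · rw [if_pos hq0] at hp2v; omega
                · rw [if_neg hq0] at hp2v; omega
            have hadj2 : D.Adj (t m) (t ⟨((m:ℕ)+a-1) % a, Nat.mod_lt _ ha⟩) := by
              apply hsym
              have := tadj ⟨((m:ℕ)+a-1) % a, Nat.mod_lt _ ha⟩
              convert this using 2
              exact Fin.ext (modcyc (m:ℕ) hmlt).symm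
            exact hno3 (t m) (t ⟨((m:ℕ)+1) % a, Nat.mod_lt _ ha⟩)
              (t ⟨((m:ℕ)+a-1) % a, Nat.mod_lt _ ha⟩) (t i)
              (tadj m) hadj2 huA (tne _ _ hp12) (tne _ _ (Ne.symm hIp1))
              (tne _ _ (Ne.symm hIp2))
        obtain ⟨m0, hm0⟩ : p.seed j ∈ Set.range t := by rw [trange]; exact seedC
        have hm0lt := m0.isLt
        have hm0max : D.IsCycLocalMax h a ha t m0 := by
          constructor
          · rw [hm0]
            refine hmax _ (trg _) ?_
            intro e
            have hv : ((m0:ℕ)+1) % a = (m0:ℕ) :=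
              congrArg Fin.val (tinj (e.trans hm0.symm))
            rw [modsucc (m0:ℕ) hm0lt] at hv
            by_cases hq : (m0:ℕ)+1 = a
            · rw [if_pos hq] at hv; omega
            · rw [if_neg hq] at hv; omega
          · rw [hm0]
            refine hmax _ (trg _) ?_
            intro e
            have hv : ((m0:ℕ)+a-1) % a = (m0:ℕ) :=
              congrArg Fin.val (tinj (e.trans hm0.symm))
            rw [modpred (m0:ℕ) hm0lt] at hv
            by_cases hq : (m0:ℕ) = 0
            · rw [if_pos hq] at hv; omega
            · rw [if_neg hq] at hv; omega
        exact ⟨⟨m0, hm0max, fun y hy => tinj ((hat y hy).trans hm0.symm)⟩, hat⟩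
end
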